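/- Let X be a finite-dimensional real vector space and let Y, Z be linear subspaces. Identify C_0(X/Y) with the subalgebra of bounded uniformly continuous functions on X of the form f ∘ π_Y, where π_Y : X → X/Y is the quotient map. Then C_0(X/Y) · C_0(X/Z), the closed linear span of products, equals C_0(X/(Y ∩ Z)). -/

import Mathlib

open Filter Topology Metric
open scoped BoundedContinuousFunction

/-- The embedded copy of `C₀(X/Y)` inside the bounded continuous functions on `X`:
functions which are invariant under translations by `Y` and which vanish at infinity
modulo `Y` (i.e. tend to `0` as the distance to `Y` tends to infinity). -/
def embeddedC0 {X : Type*} [NormedAddCommGroup X] [NormedSpace ℝ X]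
    (Y : Submodule ℝ X) : Set (X →ᵇ ℂ) :=
  {f | (∀ x : X, ∀ y ∈ Y, f (x + y) = f x) ∧
    Tendsto (⇑f) (Filter.comap (fun x : X => Metric.infDist x (Y : Set X)) atTop) (𝓝 0)}

namespace EmbeddedC0Aux

variable {X : Type*} [NormedAddCommGroup X] [NormedSpace ℝ X]

/-- infDist to a subspace is invariant under translation by elements of the subspace. -/
lemma infDist_add_mem (Y : Submodule ℝ X) (x y : X) (hy : y ∈ Y) :
    infDist (x + y) (Y : Set X) = infDist x (Y : Set X) := by
  have h1 : (fun z => z + y) '' (Y : Set X) = (Y : Set X) := by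
    ext z
    constructor
    · rintro ⟨w, hw, rfl⟩; exact Y.add_mem hw hy
    · intro hz; exact ⟨z - y, Y.sub_mem hz hy, sub_add_cancel z y⟩
  have h2 := infDist_image (t := (Y : Set X)) (x := x)
      (IsometryEquiv.addRight y).isometry
  simpa [h1] using h2

lemma infDist_neg (Y : Submodule ℝ X) (x : X) :
    infDist (-x) (Y : Set X) = infDist x (Y : Set X) := by
  have h1 : (fun z : X => -z) '' (Y : Set X) = (Y : Set X) := by
    ext z
    constructor
    · rintro ⟨w, hw, rfl⟩; exact Y.neg_mem hw
    · intro hz; exact ⟨-z, Y.neg_mem hz, neg_neg z⟩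
  have h2 := infDist_image (t := (Y : Set X)) (x := x) isometry_neg
  simpa [h1] using h2

/-- The real-valued bump function used throughout. -/
noncomputable def qb (Y : Submodule ℝ X) (a : X) (R δ : ℝ) (x : X) : ℝ :=
  max 0 (min 1 ((R + δ - infDist (x - a) (Y : Set X)) / δ))

lemma qb_nonneg (Y : Submodule ℝ X) (a : X) (R δ : ℝ) (x : X) : 0 ≤ qb Y a R δ x :=
  le_max_left _ _

lemma qb_le_one (Y : Submodule ℝ X) (a : X) (R δ : ℝ) (x : X) : qb Y a R δ x ≤ 1 :=
  max_le zero_le_one (min_le_left _ _)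

lemma qb_continuous (Y : Submodule ℝ X) (a : X) (R δ : ℝ) :
    Continuous (qb Y a R δ) := by
  refine continuous_const.max (continuous_const.min ?_)
  exact (continuous_const.sub ((continuous_infDist_pt (Y : Set X)).comp
    (continuous_id.sub continuous_const))).div_const δ

lemma qb_eq_one (Y : Submodule ℝ X) (a : X) {R δ : ℝ} (hδ : 0 < δ) {x : X}
    (hx : infDist (x - a) (Y : Set X) ≤ R) : qb Y a R δ x = 1 := by
  have h1 : (1 : ℝ) ≤ (R + δ - infDist (x - a) (Y : Set X)) / δ := by
    rw [le_div_iff₀ hδ]; linarith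
  rw [qb, min_eq_left h1, max_eq_right zero_le_one]

lemma qb_eq_zero (Y : Submodule ℝ X) (a : X) {R δ : ℝ} (hδ : 0 < δ) {x : X}
    (hx : R + δ ≤ infDist (x - a) (Y : Set X)) : qb Y a R δ x = 0 := by
  have h1 : (R + δ - infDist (x - a) (Y : Set X)) / δ ≤ 0 := by
    apply div_nonpos_of_nonpos_of_nonneg _ hδ.le; linarith
  rw [qb, max_eq_left]
  exact le_trans (min_le_right _ _) h1

/-- The complex bump as a bounded continuous function. -/
noncomputable def qBump (Y : Submodule ℝ X) (a : X) (R δ : ℝ) : X →ᵇ ℂ :=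
  BoundedContinuousFunction.mkOfBound
    ⟨fun x => ((qb Y a R δ x : ℝ) : ℂ),
      Complex.continuous_ofReal.comp (qb_continuous Y a R δ)⟩ 2
    (by
      intro x y
      have hx : ‖((qb Y a R δ x : ℝ) : ℂ)‖ ≤ 1 := by
        rw [Complex.norm_real, Real.norm_eq_abs, abs_of_nonneg (qb_nonneg _ _ _ _ _)]
        exact qb_le_one _ _ _ _ _
      have hy : ‖((qb Y a R δ y : ℝ) : ℂ)‖ ≤ 1 := by
        rw [Complex.norm_real, Real.norm_eq_abs, abs_of_nonneg (qb_nonneg _ _ _ _ _)]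
        exact qb_le_one _ _ _ _ _
      calc dist ((qb Y a R δ x : ℝ) : ℂ) ((qb Y a R δ y : ℝ) : ℂ)
          ≤ ‖((qb Y a R δ x : ℝ) : ℂ)‖ + ‖((qb Y a R δ y : ℝ) : ℂ)‖ := dist_le_norm_add_norm _ _
        _ ≤ 2 := by linarith)

@[simp] lemma qBump_apply (Y : Submodule ℝ X) (a : X) (R δ : ℝ) (x : X) :
    qBump Y a R δ x = ((qb Y a R δ x : ℝ) : ℂ) := rfl

/-- Rephrasing of eventually along the comap filter. -/
lemma ev_comap {d : X → ℝ} {p : X → Prop} :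
    (∀ᶠ x in comap d atTop, p x) ↔ ∃ R : ℝ, ∀ x, R ≤ d x → p x := by
  rw [eventually_comap, eventually_atTop]
  constructor
  · rintro ⟨R, hR⟩; exact ⟨R, fun x hx => hR (d x) hx x rfl⟩
  · rintro ⟨R, hR⟩; exact ⟨R, fun b hb x hx => hR x (hx ▸ hb)⟩

lemma qBump_mem (Y : Submodule ℝ X) (a : X) (R : ℝ) {δ : ℝ} (hδ : 0 < δ) :
    qBump Y a R δ ∈ embeddedC0 Y := by
  constructor
  · intro x y hy
    have : (x + y) - a = (x - a) + y := by abel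
    simp only [qBump_apply, qb, this, infDist_add_mem Y (x - a) y hy]
  · have hev : ∀ᶠ x in comap (fun x : X => infDist x (Y : Set X)) atTop,
        (qBump Y a R δ) x = 0 := by
      rw [ev_comap]
      refine ⟨R + δ + ‖a‖, fun x hx => ?_⟩
      have h1 : infDist x (Y : Set X) ≤ infDist (x - a) (Y : Set X) + ‖a‖ := by
        have h2 := infDist_le_infDist_add_dist (x := x) (y := x - a) (s := (Y : Set X))
        have h3 : dist x (x - a) = ‖a‖ := by
          rw [dist_eq_norm]; congr 1; abel
        linarith [h2, h3.le]
      have h4 : R + δ ≤ infDist (x - a) (Y : Set X) := by linarith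
      simp only [qBump_apply, qb_eq_zero Y a hδ h4, Complex.ofReal_zero]
    exact Tendsto.congr' (hev.mono fun x hx => hx.symm) tendsto_const_nhds


/-- `embeddedC0 Y` as a `ℂ`-submodule. -/
noncomputable def eC0 (Y : Submodule ℝ X) : Submodule ℂ (X →ᵇ ℂ) where
  carrier := embeddedC0 Y
  add_mem' := by
    rintro f g ⟨hf1, hf2⟩ ⟨hg1, hg2⟩
    refine ⟨fun x y hy => ?_, ?_⟩
    · simp only [BoundedContinuousFunction.coe_add, Pi.add_apply, hf1 x y hy, hg1 x y hy]
    · have := hf2.add hg2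
      rw [add_zero] at this; rw [BoundedContinuousFunction.coe_add]; exact this
  zero_mem' := by
    refine ⟨fun x y hy => rfl, ?_⟩
    rw [BoundedContinuousFunction.coe_zero]; exact tendsto_const_nhds
  smul_mem' := by
    rintro c f ⟨hf1, hf2⟩
    refine ⟨fun x y hy => ?_, ?_⟩
    · simp only [BoundedContinuousFunction.coe_smul, Pi.smul_apply, hf1 x y hy]
    · have := hf2.const_smul c
      simpa using this

@[simp] lemma eC0_coe (Y : Submodule ℝ X) : (eC0 Y : Set (X →ᵇ ℂ)) = embeddedC0 Y := rfl

lemma tendsto_mul_of_left {l : Filter X} {f g : X →ᵇ ℂ} (hf : Tendsto (⇑f) l (𝓝 0)) :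
    Tendsto (⇑(f * g)) l (𝓝 0) := by
  have hb : ∀ x, ‖(f * g) x‖ ≤ ‖g‖ * ‖f x‖ := by
    intro x
    rw [BoundedContinuousFunction.mul_apply, norm_mul, mul_comm]
    exact mul_le_mul_of_nonneg_right (g.norm_coe_le_norm x) (norm_nonneg _)
  have h0 : Tendsto (fun x => ‖g‖ * ‖f x‖) l (𝓝 0) := by
    have := (tendsto_zero_iff_norm_tendsto_zero.mp hf).const_mul ‖g‖
    simpa using this
  exact squeeze_zero_norm hb h0

lemma mul_mem_same (Y : Submodule ℝ X) {f g : X →ᵇ ℂ}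
    (hf : f ∈ embeddedC0 Y) (hg : g ∈ embeddedC0 Y) : f * g ∈ embeddedC0 Y := by
  refine ⟨fun x y hy => ?_, tendsto_mul_of_left hf.2⟩
  simp only [BoundedContinuousFunction.mul_apply, hf.1 x y hy, hg.1 x y hy]

lemma star_mem (Y : Submodule ℝ X) {f : X →ᵇ ℂ}
    (hf : f ∈ embeddedC0 Y) : star f ∈ embeddedC0 Y := by
  refine ⟨fun x y hy => ?_, ?_⟩
  · simp only [BoundedContinuousFunction.coe_star, Pi.star_apply, hf.1 x y hy]
  · have h2 := tendsto_zero_iff_norm_tendsto_zero.mp hf.2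
    rw [tendsto_zero_iff_norm_tendsto_zero]
    exact h2.congr fun x => (norm_star (f x)).symm

lemma isClosed_embeddedC0 (Y : Submodule ℝ X) : IsClosed (embeddedC0 Y) := by
  apply isClosed_of_closure_subset
  intro f hf
  constructor
  · intro x y hy
    have key : ∀ ε : ℝ, 0 < ε → dist (f (x + y)) (f x) ≤ ε := by
      intro ε hε
      obtain ⟨g, hg, hd⟩ := Metric.mem_closure_iff.mp hf (ε / 2) (by linarith)
      have h1 : dist (f (x + y)) (g (x + y)) ≤ ε / 2 :=
        le_of_lt (lt_of_le_of_lt (BoundedContinuousFunction.dist_coe_le_dist _) hd)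
      have h2 : dist (g x) (f x) ≤ ε / 2 := by
        rw [dist_comm]
        exact le_of_lt (lt_of_le_of_lt (BoundedContinuousFunction.dist_coe_le_dist _) hd)
      calc dist (f (x + y)) (f x) ≤ dist (f (x + y)) (g (x + y)) + dist (g (x + y)) (f x) :=
            dist_triangle _ _ _
        _ = dist (f (x + y)) (g (x + y)) + dist (g x) (f x) := by rw [hg.1 x y hy]
        _ ≤ ε := by linarith
    have : dist (f (x + y)) (f x) ≤ 0 := le_of_forall_gt_imp_ge_of_dense (by
      intro ε hε; exact key ε hε)
    exact eq_of_dist_eq_zero (le_antisymm this dist_nonneg)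
  · rw [Metric.tendsto_nhds]
    intro ε hε
    obtain ⟨g, hg, hd⟩ := Metric.mem_closure_iff.mp hf (ε / 2) (by linarith)
    have := Metric.tendsto_nhds.mp hg.2 (ε / 2) (by linarith)
    refine this.mono fun x hx => ?_
    calc dist (f x) 0 ≤ dist (f x) (g x) + dist (g x) 0 := dist_triangle _ _ _
      _ < ε / 2 + ε / 2 := by
          have h1 : dist (f x) (g x) ≤ dist f g := BoundedContinuousFunction.dist_coe_le_dist _
          exact add_lt_add_of_le_of_lt (lt_of_le_of_lt h1 hd).le hx |>.trans_le le_rfl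
      _ = ε := by ring

section FinDim
variable [FiniteDimensional ℝ X]

lemma lemA_V (Y Z V : Submodule ℝ X) (h : ∀ v ∈ V, v ∈ Y → v ∈ Z → v = 0) :
    ∃ C > 0, ∀ v ∈ V, ‖v‖ ≤ C * (infDist v (Y : Set X) + infDist v (Z : Set X)) := by
  haveI hYc : IsClosed (Y : Set X) := Y.closed_of_finiteDimensional
  haveI hZc : IsClosed (Z : Set X) := Z.closed_of_finiteDimensional
  set T : V →ₗ[ℝ] (X ⧸ Y) × (X ⧸ Z) := (Y.mkQ.prod Z.mkQ).comp V.subtype with hT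
  have hker : LinearMap.ker T = ⊥ := by
    rw [LinearMap.ker_eq_bot']
    rintro ⟨v, hv⟩ he
    have h1 : Y.mkQ v = 0 := congrArg Prod.fst he
    have h2 : Z.mkQ v = 0 := congrArg Prod.snd he
    simp only [Submodule.mkQ_apply, Submodule.Quotient.mk_eq_zero] at h1 h2
    exact Subtype.ext (h v hv h1 h2)
  obtain ⟨K, hK, hanti⟩ := T.exists_antilipschitzWith hker
  have hK' : (0:ℝ) < K := hK
  refine ⟨K, hK', fun v hv => ?_⟩
  have hd := hanti.le_mul_dist ⟨v, hv⟩ 0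
  rw [map_zero, dist_zero_right, dist_zero_right] at hd
  calc ‖v‖ = ‖(⟨v,hv⟩ : V)‖ := rfl
    _ ≤ K * ‖T ⟨v, hv⟩‖ := hd
    _ ≤ K * (infDist v (Y:Set X) + infDist v (Z:Set X)) := by
        refine mul_le_mul_of_nonneg_left ?_ hK'.le
        have he : T ⟨v, hv⟩ = (Y.mkQ v, Z.mkQ v) := rfl
        rw [he]
        have h1 : ‖Y.mkQ v‖ = infDist v (Y:Set X) := QuotientAddGroup.norm_mk v
        have h2 : ‖Z.mkQ v‖ = infDist v (Z:Set X) := QuotientAddGroup.norm_mk v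
        rw [Prod.norm_def]
        simp only [Submodule.mkQ_apply] at h1 h2 ⊢
        rw [h1, h2]
        exact max_le (le_add_of_nonneg_right infDist_nonneg)
          (le_add_of_nonneg_left infDist_nonneg)

/-- The key finite-dimensional estimate: the distance to `Y ⊓ Z` is controlled by the
sum of the distances to `Y` and to `Z`. -/
lemma lemA (Y Z V : Submodule ℝ X) (hVc : IsCompl (Y ⊓ Z) V) :
    ∃ C > 0, ∀ x : X,
      infDist x ((Y ⊓ Z : Submodule ℝ X) : Set X)
        ≤ C * (infDist x (Y : Set X) + infDist x (Z : Set X)) := by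
  obtain ⟨C, hC, hCle⟩ := lemA_V Y Z V (fun v hv hvY hvZ => by
    have : v ∈ (Y ⊓ Z) ⊓ V := ⟨⟨hvY, hvZ⟩, hv⟩
    rwa [hVc.inf_eq_bot, Submodule.mem_bot] at this)
  refine ⟨C, hC, fun x => ?_⟩
  have hx : x ∈ (Y ⊓ Z) ⊔ V := by rw [hVc.sup_eq_top]; trivial
  obtain ⟨w, hw, v, hv, rfl⟩ := Submodule.mem_sup.mp hx
  have hwY : w ∈ Y := hw.1
  have hwZ : w ∈ Z := hw.2
  have e0 : w + v = v + w := add_comm _ _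
  rw [e0, infDist_add_mem (Y ⊓ Z) v w hw, infDist_add_mem Y v w hwY,
    infDist_add_mem Z v w hwZ]
  calc infDist v ((Y ⊓ Z : Submodule ℝ X) : Set X) ≤ dist v 0 :=
        infDist_le_dist_of_mem (Submodule.zero_mem _)
    _ = ‖v‖ := dist_zero_right v
    _ ≤ C * (infDist v (Y : Set X) + infDist v (Z : Set X)) := hCle v hv

end FinDim


/-- Restriction of bounded continuous functions to a subset, as a star algebra
homomorphism into the continuous functions on the subset. -/
noncomputable def restrictSA (K : Set X) : (X →ᵇ ℂ) →⋆ₐ[ℂ] C(K, ℂ) where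
  toFun f := (f : C(X, ℂ)).restrict K
  map_one' := rfl
  map_mul' f g := rfl
  map_zero' := rfl
  map_add' f g := rfl
  commutes' c := rfl
  map_star' f := rfl

@[simp] lemma restrictSA_apply (K : Set X) (f : X →ᵇ ℂ) (x : K) :
    restrictSA K f x = f (x : X) := rfl

end EmbeddedC0Aux

open EmbeddedC0Aux


theorem embeddedC0_mul_embeddedC0
    {X : Type*} [NormedAddCommGroup X] [NormedSpace ℝ X] [FiniteDimensional ℝ X]
    (Y Z : Submodule ℝ X) :
    closure ((Submodule.span ℂ
        {h : X →ᵇ ℂ | ∃ f ∈ embeddedC0 Y, ∃ g ∈ embeddedC0 Z, h = f * g} :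
          Submodule ℂ (X →ᵇ ℂ)) : Set (X →ᵇ ℂ))
      = embeddedC0 (Y ⊓ Z) := by
  classical
  set S := {h : X →ᵇ ℂ | ∃ f ∈ embeddedC0 Y, ∃ g ∈ embeddedC0 Z, h = f * g} with hSdef
  set P := Submodule.span ℂ S with hPdef
  obtain ⟨V, hVc⟩ := Submodule.exists_isCompl (Y ⊓ Z)
  obtain ⟨C, hC, hCle⟩ := EmbeddedC0Aux.lemA Y Z V hVc
  obtain ⟨C₁, hC₁, hC₁le⟩ := EmbeddedC0Aux.lemA_V Y Z V (fun v hv hvY hvZ => by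
    have hm : v ∈ (Y ⊓ Z) ⊓ V := ⟨⟨hvY, hvZ⟩, hv⟩
    rwa [hVc.inf_eq_bot, Submodule.mem_bot] at hm)
  have hWmax : ∀ U : Submodule ℝ X, (Y ⊓ Z) ≤ U → ∀ x : X,
      infDist x (U : Set X) ≤ infDist x ((Y ⊓ Z : Submodule ℝ X) : Set X) :=
    fun U hU x => infDist_le_infDist_of_subset hU ⟨0, Submodule.zero_mem _⟩
  -- products land in embeddedC0 (Y ⊓ Z)
  have hSsub : S ⊆ embeddedC0 (Y ⊓ Z) := by
    rintro p ⟨f, hf, g, hg, rfl⟩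
    constructor
    · intro x w hw
      simp only [BoundedContinuousFunction.mul_apply,
        hf.1 x w (Submodule.mem_inf.mp hw).1, hg.1 x w (Submodule.mem_inf.mp hw).2]
    · rw [Metric.tendsto_nhds]
      intro ε hε
      set B := ‖f‖ + ‖g‖ + 1 with hB
      have hB1 : 0 < B := by positivity
      have hεB : 0 < ε / B := by positivity
      obtain ⟨R₁, hR₁⟩ := EmbeddedC0Aux.ev_comap.mp (Metric.tendsto_nhds.mp hf.2 (ε/B) hεB)
      obtain ⟨R₂, hR₂⟩ := EmbeddedC0Aux.ev_comap.mp (Metric.tendsto_nhds.mp hg.2 (ε/B) hεB)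
      rw [EmbeddedC0Aux.ev_comap]
      refine ⟨C * (max R₁ 0 + max R₂ 0), fun x hx => ?_⟩
      have hsum : max R₁ 0 + max R₂ 0 ≤ infDist x (Y : Set X) + infDist x (Z : Set X) :=
        le_of_mul_le_mul_left (le_trans hx (hCle x)) hC
      have hcase : max R₁ 0 ≤ infDist x (Y : Set X) ∨ max R₂ 0 ≤ infDist x (Z : Set X) := by
        by_contra hcon
        push_neg at hcon
        linarith [hcon.1, hcon.2]
      rw [dist_zero_right]
      have hfg : ‖(f * g) x‖ = ‖f x‖ * ‖g x‖ := by
        rw [BoundedContinuousFunction.mul_apply, norm_mul]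
      rcases hcase with hca | hca
      · have h1 : ‖f x‖ < ε / B := by
          have := hR₁ x (le_trans (le_max_left _ _) hca)
          rwa [dist_zero_right] at this
        calc ‖(f*g) x‖ = ‖f x‖ * ‖g x‖ := hfg
          _ ≤ ‖f x‖ * ‖g‖ := mul_le_mul_of_nonneg_left (g.norm_coe_le_norm x) (norm_nonneg _)
          _ ≤ (ε / B) * ‖g‖ := mul_le_mul_of_nonneg_right h1.le (norm_nonneg _)
          _ < ε := by
              have hgB : ‖g‖ < B := by
                have := norm_nonneg f; rw [hB]; linarith
              calc (ε/B) * ‖g‖ < (ε/B) * B := by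
                    exact mul_lt_mul_of_pos_left hgB hεB
                _ = ε := div_mul_cancel₀ ε hB1.ne'
      · have h1 : ‖g x‖ < ε / B := by
          have := hR₂ x (le_trans (le_max_left _ _) hca)
          rwa [dist_zero_right] at this
        calc ‖(f*g) x‖ = ‖f x‖ * ‖g x‖ := hfg
          _ ≤ ‖f‖ * ‖g x‖ := mul_le_mul_of_nonneg_right (f.norm_coe_le_norm x) (norm_nonneg _)
          _ ≤ ‖f‖ * (ε / B) := mul_le_mul_of_nonneg_left h1.le (norm_nonneg _)
          _ < ε := by
              have hfB : ‖f‖ < B := by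
                have := norm_nonneg g; rw [hB]; linarith
              calc ‖f‖ * (ε/B) < B * (ε/B) := by
                    exact mul_lt_mul_of_pos_right hfB hεB
                _ = ε := by field_simp
  have hPsub : (P : Set (X →ᵇ ℂ)) ⊆ embeddedC0 (Y ⊓ Z) := by
    have hle : P ≤ EmbeddedC0Aux.eC0 (Y ⊓ Z) := Submodule.span_le.mpr hSsub
    exact hle
  -- algebraic closure properties of P
  have hPmul : ∀ p ∈ P, ∀ r ∈ P, p * r ∈ P := by
    intro p hp r hr
    have hmm := Submodule.mul_mem_mul hp hr
    have hle : P * P ≤ P := by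
      rw [hPdef, Submodule.span_mul_span]
      apply Submodule.span_le.mpr
      rintro t ht
      obtain ⟨a, ha, b, hb, rfl⟩ := ht
      apply Submodule.subset_span
      obtain ⟨f, hf, g, hg, rfl⟩ := ha
      obtain ⟨f', hf', g', hg', rfl⟩ := hb
      exact ⟨f * f', EmbeddedC0Aux.mul_mem_same Y hf hf', g * g',
        EmbeddedC0Aux.mul_mem_same Z hg hg', by ring⟩
    exact hle hmm
  have hPstar : ∀ p ∈ P, star p ∈ P := by
    intro p hp
    induction hp using Submodule.span_induction with
    | mem x hx =>
        obtain ⟨f, hf, g, hg, rfl⟩ := hx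
        apply Submodule.subset_span
        exact ⟨star f, EmbeddedC0Aux.star_mem Y hf, star g,
          EmbeddedC0Aux.star_mem Z hg, by rw [star_mul, mul_comm]⟩
    | zero => simpa using Submodule.zero_mem P
    | add x y hx hy ihx ihy => rw [star_add]; exact Submodule.add_mem _ ihx ihy
    | smul c x hx ihx => rw [star_smul]; exact Submodule.smul_mem _ _ ihx
  have hkeymul : ∀ Q' : X →ᵇ ℂ, Q' ∈ StarAlgebra.adjoin ℂ S → ∀ p ∈ P, p * Q' ∈ P := by
    intro Q' hQ'
    induction hQ' using StarAlgebra.adjoin_induction with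
    | mem x hx => exact fun p hp => hPmul p hp x (Submodule.subset_span hx)
    | algebraMap r =>
        intro p hp
        have he : p * (algebraMap ℂ (X →ᵇ ℂ) r) = r • p := by
          rw [Algebra.algebraMap_eq_smul_one, mul_smul_comm, mul_one]
        rw [he]
        exact Submodule.smul_mem _ _ hp
    | add x y hx hy ihx ihy =>
        intro p hp
        rw [mul_add]
        exact Submodule.add_mem _ (ihx p hp) (ihy p hp)
    | mul x y hx hy ihx ihy =>
        intro p hp
        rw [← mul_assoc]
        exact ihy _ (ihx p hp)
    | star x hx ih =>
        intro p hp
        have he : p * star x = star (star p * x) := by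
          rw [star_mul, star_star, mul_comm]
        rw [he]
        exact hPstar _ (ih _ (hPstar p hp))
  apply subset_antisymm
  · exact closure_minimal hPsub (EmbeddedC0Aux.isClosed_embeddedC0 _)
  · intro h hh
    rw [Metric.mem_closure_iff]
    intro ε hε
    set ε' := ε / 3 with hε'def
    have hε' : 0 < ε' := by positivity
    obtain ⟨R₀, hR₀⟩ := EmbeddedC0Aux.ev_comap.mp (Metric.tendsto_nhds.mp hh.2 ε' hε')
    set R := max R₀ 0 with hRdef
    have hR0 : (0:ℝ) ≤ R := le_max_right _ _
    have hR : ∀ x : X, R ≤ infDist x ((Y ⊓ Z : Submodule ℝ X) : Set X) → ‖h x‖ ≤ ε' := by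
      intro x hx
      have := hR₀ x (le_trans (le_max_left _ _) hx)
      rw [dist_zero_right] at this
      exact this.le
    set K : Set X := {v : X | v ∈ V ∧ infDist v (Y : Set X) ≤ R + 1 ∧
      infDist v (Z : Set X) ≤ R + 1} with hKdef
    have hKc : IsCompact K := by
      apply isCompact_of_isClosed_isBounded
      · have h1 : IsClosed {v : X | v ∈ V} := V.closed_of_finiteDimensional
        have h2 : IsClosed {v : X | infDist v (Y : Set X) ≤ R + 1} :=
          isClosed_le (continuous_infDist_pt _) continuous_const
        have h3 : IsClosed {v : X | infDist v (Z : Set X) ≤ R + 1} :=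
          isClosed_le (continuous_infDist_pt _) continuous_const
        exact h1.inter (h2.inter h3)
      · have hsub : K ⊆ Metric.closedBall 0 (C₁ * (2*R+2)) := by
          rintro v ⟨hv, h1, h2⟩
          rw [Metric.mem_closedBall, dist_zero_right]
          calc ‖v‖ ≤ C₁ * (infDist v (Y : Set X) + infDist v (Z : Set X)) := hC₁le v hv
            _ ≤ C₁ * (2*R+2) := by
                apply mul_le_mul_of_nonneg_left _ hC₁.le
                linarith
        exact Metric.isBounded_closedBall.subset hsub
    haveI hKcs : CompactSpace K := isCompact_iff_compactSpace.mp hKc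
    set ρ := EmbeddedC0Aux.restrictSA (X := X) K with hρdef
    set BB := (StarAlgebra.adjoin ℂ S).map ρ with hBBdef
    have hsep : BB.SeparatesPoints := by
      rintro ⟨v, hvK⟩ ⟨v', hvK'⟩ hneq
      have hne : v ≠ v' := fun hc => hneq (Subtype.ext hc)
      have hvV : v ∈ V := hvK.1
      have hvV' : v' ∈ V := hvK'.1
      have hsubVW : v - v' ∉ (Y ⊓ Z : Submodule ℝ X) := by
        intro hc
        have hmem : v - v' ∈ (Y ⊓ Z) ⊓ V := ⟨hc, V.sub_mem hvV hvV'⟩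
        rw [hVc.inf_eq_bot, Submodule.mem_bot] at hmem
        exact hne (sub_eq_zero.mp hmem)
      have hor : v - v' ∉ Y ∨ v - v' ∉ Z := by
        by_contra hcon
        push_neg at hcon
        exact hsubVW (Submodule.mem_inf.mpr ⟨hcon.1, hcon.2⟩)
      -- in both cases we produce a product p ∈ S with p v = 1, p v' = 0
      have hprod : ∃ p : X →ᵇ ℂ, p ∈ S ∧ p v = 1 ∧ p v' = 0 := by
        rcases hor with hY | hZ
        · haveI : IsClosed (Y : Set X) := Y.closed_of_finiteDimensional
          set δ := infDist (v - v') (Y : Set X) with hδdef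
          have hδ : 0 < δ := by
            rw [hδdef]
            exact (this.notMem_iff_infDist_pos ⟨0, Submodule.zero_mem _⟩).mp hY
          refine ⟨EmbeddedC0Aux.qBump Y v 0 δ * EmbeddedC0Aux.qBump Z 0 (R+1) 1,
            ⟨_, EmbeddedC0Aux.qBump_mem Y v 0 hδ, _,
              EmbeddedC0Aux.qBump_mem Z 0 (R+1) one_pos, rfl⟩, ?_, ?_⟩
          · rw [BoundedContinuousFunction.mul_apply]
            have e1 : EmbeddedC0Aux.qb Y v 0 δ v = 1 := by
              apply EmbeddedC0Aux.qb_eq_one Y v hδ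
              simp [Metric.infDist_zero_of_mem (Y.zero_mem)]
            have e2 : EmbeddedC0Aux.qb Z 0 (R+1) 1 v = 1 := by
              apply EmbeddedC0Aux.qb_eq_one Z 0 one_pos
              simpa using hvK.2.2
            simp [e1, e2]
          · rw [BoundedContinuousFunction.mul_apply]
            have e1 : EmbeddedC0Aux.qb Y v 0 δ v' = 0 := by
              apply EmbeddedC0Aux.qb_eq_zero Y v hδ
              have : v' - v = -(v - v') := by abel
              rw [this, EmbeddedC0Aux.infDist_neg]
              simp [hδdef]
            simp [e1]
        · haveI : IsClosed (Z : Set X) := Z.closed_of_finiteDimensional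
          set δ := infDist (v - v') (Z : Set X) with hδdef
          have hδ : 0 < δ := by
            rw [hδdef]
            exact (this.notMem_iff_infDist_pos ⟨0, Submodule.zero_mem _⟩).mp hZ
          refine ⟨EmbeddedC0Aux.qBump Y 0 (R+1) 1 * EmbeddedC0Aux.qBump Z v 0 δ,
            ⟨_, EmbeddedC0Aux.qBump_mem Y 0 (R+1) one_pos, _,
              EmbeddedC0Aux.qBump_mem Z v 0 hδ, rfl⟩, ?_, ?_⟩
          · rw [BoundedContinuousFunction.mul_apply]
            have e1 : EmbeddedC0Aux.qb Z v 0 δ v = 1 := by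
              apply EmbeddedC0Aux.qb_eq_one Z v hδ
              simp [Metric.infDist_zero_of_mem (Z.zero_mem)]
            have e2 : EmbeddedC0Aux.qb Y 0 (R+1) 1 v = 1 := by
              apply EmbeddedC0Aux.qb_eq_one Y 0 one_pos
              simpa using hvK.2.1
            simp [e1, e2]
          · rw [BoundedContinuousFunction.mul_apply]
            have e1 : EmbeddedC0Aux.qb Z v 0 δ v' = 0 := by
              apply EmbeddedC0Aux.qb_eq_zero Z v hδ
              have : v' - v = -(v - v') := by abel
              rw [this, EmbeddedC0Aux.infDist_neg]
              simp [hδdef]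
            simp [e1]
      obtain ⟨p, hpS, hpv, hpv'⟩ := hprod
      refine ⟨⇑(ρ p), ⟨ρ p, ?_, rfl⟩, ?_⟩
      · exact ⟨p, StarAlgebra.subset_adjoin ℂ S hpS, rfl⟩
      · have e1 : (ρ p) ⟨v, hvK⟩ = p v := rfl
        have e2 : (ρ p) ⟨v', hvK'⟩ = p v' := rfl
        rw [e1, e2, hpv, hpv']
        exact one_ne_zero
    have htop := ContinuousMap.starSubalgebra_topologicalClosure_eq_top_of_separatesPoints BB hsep
    have hmem : (ρ h : C(K, ℂ)) ∈ closure (BB : Set C(K, ℂ)) := by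
      rw [← StarSubalgebra.topologicalClosure_coe, htop]
      simp
    obtain ⟨q, hqB, hq⟩ := Metric.mem_closure_iff.mp hmem ε' hε'
    obtain ⟨Q, hQadj, rfl⟩ := hqB
    set Φ := EmbeddedC0Aux.qBump Y 0 R 1 * EmbeddedC0Aux.qBump Z 0 R 1 with hΦdef
    have hΦS : Φ ∈ S := ⟨_, EmbeddedC0Aux.qBump_mem Y 0 R one_pos, _,
      EmbeddedC0Aux.qBump_mem Z 0 R one_pos, rfl⟩
    have hΦP : Φ ∈ P := Submodule.subset_span hΦS
    have hpP : Φ * Q ∈ P := hkeymul Q hQadj Φ hΦP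
    refine ⟨Φ * Q, hpP, ?_⟩
    have hle2 : dist h (Φ * Q) ≤ 2 * ε' := by
      rw [BoundedContinuousFunction.dist_le (by positivity)]
      intro x
      have hx : x ∈ (Y ⊓ Z) ⊔ V := by rw [hVc.sup_eq_top]; trivial
      obtain ⟨w, hw, v, hv, rfl⟩ := Submodule.mem_sup.mp hx
      have hinv : ∀ u : X →ᵇ ℂ, u ∈ embeddedC0 (Y ⊓ Z) → u (w + v) = u v := by
        intro u hu
        rw [add_comm]
        exact hu.1 v w hw
      rw [hinv h hh, hinv (Φ * Q) (hPsub hpP)]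
      by_cases hvK : v ∈ K
      · have hdistQ : dist (h v) (Q v) < ε' := by
          have h1 : dist ((ρ h) ⟨v, hvK⟩) ((ρ Q) ⟨v, hvK⟩) ≤ dist (ρ h) (ρ Q) :=
            ContinuousMap.dist_apply_le_dist _
          exact lt_of_le_of_lt h1 hq
        set t := EmbeddedC0Aux.qb Y 0 R 1 v * EmbeddedC0Aux.qb Z 0 R 1 v with htdef
        have ht0 : 0 ≤ t := mul_nonneg (EmbeddedC0Aux.qb_nonneg _ _ _ _ _)
          (EmbeddedC0Aux.qb_nonneg _ _ _ _ _)
        have ht1 : t ≤ 1 := mul_le_one₀ (EmbeddedC0Aux.qb_le_one _ _ _ _ _)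
          (EmbeddedC0Aux.qb_nonneg _ _ _ _ _) (EmbeddedC0Aux.qb_le_one _ _ _ _ _)
        have hΦv : Φ v = ((t : ℝ) : ℂ) := by
          rw [hΦdef, BoundedContinuousFunction.mul_apply, EmbeddedC0Aux.qBump_apply,
            EmbeddedC0Aux.qBump_apply, htdef, Complex.ofReal_mul]
        have hkey : dist (h v) ((Φ * Q) v) ≤ (1 - t) * ‖h v‖ + t * dist (h v) (Q v) := by
          have he : h v - (Φ * Q) v = (1 - Φ v) * h v + Φ v * (h v - Q v) := by
            rw [BoundedContinuousFunction.mul_apply]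
            ring
          rw [dist_eq_norm, he]
          refine le_trans (norm_add_le _ _) ?_
          rw [norm_mul, norm_mul]
          have e1 : ‖1 - Φ v‖ = 1 - t := by
            rw [hΦv]
            have e : (1 : ℂ) - ((t:ℝ):ℂ) = (((1 - t : ℝ)):ℂ) := by push_cast; ring
            rw [e, Complex.norm_real, Real.norm_eq_abs, abs_of_nonneg (by linarith)]
          have e2 : ‖Φ v‖ = t := by
            rw [hΦv, Complex.norm_real, Real.norm_eq_abs, abs_of_nonneg ht0]
          rw [e1, e2, ← dist_eq_norm]
        have h1b : (1 - t) * ‖h v‖ ≤ ε' := by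
          by_cases hd : infDist v (Y : Set X) ≤ R ∧ infDist v (Z : Set X) ≤ R
          · have ht : t = 1 := by
              rw [htdef, EmbeddedC0Aux.qb_eq_one Y 0 one_pos (by simpa using hd.1),
                EmbeddedC0Aux.qb_eq_one Z 0 one_pos (by simpa using hd.2), mul_one]
            rw [ht]
            simp [hε'.le]
          · have hRW : R ≤ infDist v ((Y ⊓ Z : Submodule ℝ X) : Set X) := by
              rcases not_and_or.mp hd with hd' | hd'
              · push_neg at hd'
                exact le_trans hd'.le (hWmax Y inf_le_left v)
              · push_neg at hd'
                exact le_trans hd'.le (hWmax Z inf_le_right v)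
            have hhv : ‖h v‖ ≤ ε' := hR v hRW
            nlinarith [norm_nonneg (h v)]
        calc dist (h v) ((Φ*Q) v) ≤ (1-t)*‖h v‖ + t * dist (h v) (Q v) := hkey
          _ ≤ ε' + 1 * ε' := by
              refine add_le_add h1b ?_
              have := mul_le_mul ht1 hdistQ.le dist_nonneg zero_le_one
              simpa using this
          _ = 2 * ε' := by ring
      · have hcase : ¬(infDist v (Y : Set X) ≤ R + 1 ∧ infDist v (Z : Set X) ≤ R + 1) :=
          fun hc => hvK ⟨hv, hc⟩
        have hΦ0 : Φ v = 0 := by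
          rw [hΦdef, BoundedContinuousFunction.mul_apply]
          rcases not_and_or.mp hcase with hd | hd
          · push_neg at hd
            have e : EmbeddedC0Aux.qb Y 0 R 1 v = 0 :=
              EmbeddedC0Aux.qb_eq_zero Y 0 one_pos (by simpa using hd.le)
            simp [EmbeddedC0Aux.qBump_apply, e]
          · push_neg at hd
            have e : EmbeddedC0Aux.qb Z 0 R 1 v = 0 :=
              EmbeddedC0Aux.qb_eq_zero Z 0 one_pos (by simpa using hd.le)
            simp [EmbeddedC0Aux.qBump_apply, e]
        have hRW : R ≤ infDist v ((Y ⊓ Z : Submodule ℝ X) : Set X) := by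
          rcases not_and_or.mp hcase with hd | hd
          · push_neg at hd
            have : R + 1 ≤ infDist v (Y : Set X) := hd.le
            linarith [hWmax Y inf_le_left v]
          · push_neg at hd
            have : R + 1 ≤ infDist v (Z : Set X) := hd.le
            linarith [hWmax Z inf_le_right v]
        have hzero : (Φ * Q) v = 0 := by
          rw [BoundedContinuousFunction.mul_apply, hΦ0, zero_mul]
        rw [hzero, dist_zero_right]
        have := hR v hRW
        linarith
    calc dist h (Φ * Q) ≤ 2 * ε' := hle2
      _ < ε := by rw [hε'def]; linarith
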